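/- There is a unique Lie algebra structure on the quotient ℂ-vector space F₀ := π₀ / (∂(π₀) + ℂ·1) (the space of local functionals) whose bracket satisfies {[P], [R]} = [ξ_P(R)] for all P, R ∈ π₀, where [·] denotes the class in F₀. In particular the bracket is well defined (ξ_P(R) modulo ∂(π₀) + ℂ·1 depends only on the classes of P and R), antisymmetric, and satisfies the Jacobi identity. -/

import Mathlib

set_option maxHeartbeats 1000000


open MvPolynomial

noncomputable section

/-- The algebra of differential polynomials in the variables `u_i^{(n)}`, `1 ≤ i ≤ l`, `n ≥ 0`. -/
abbrev Pi0 (l : ℕ) : Type := MvPolynomial (Fin l × ℕ) ℂ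

/-- The variable `u_i^{(n)}`. -/
def u {l : ℕ} (i : Fin l) (n : ℕ) : Pi0 l := X (i, n)

/-- The derivation `∂` with `∂ u_i^{(n)} = u_i^{(n+1)}`. -/
def pa (l : ℕ) : Derivation ℂ (Pi0 l) (Pi0 l) :=
  mkDerivation ℂ (fun p => X (p.1, p.2 + 1))

variable {l : ℕ}

/-- The variational derivative `δ_i P := ∑_{j=1}^l c_{ij} ∑_{n ≥ 0} (-∂)^n (∂P/∂u_j^{(n)})`
associated to a symmetric matrix `c` of complex numbers. -/
def vard (c : Matrix (Fin l) (Fin l) ℂ) (i : Fin l) (P : Pi0 l) : Pi0 l :=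
  ∑ j : Fin l, c i j • ∑ᶠ n : ℕ, ((-(pa l).toLinearMap) ^ n) (pderiv (j, n) P)

/-- The hamiltonian vector field `ξ_P`: the unique `ℂ`-derivation of `π₀` with
`ξ_P u_i^{(n)} = ∂^{n+1}(δ_i P)`. -/
def xic (c : Matrix (Fin l) (Fin l) ℂ) (P : Pi0 l) : Derivation ℂ (Pi0 l) (Pi0 l) :=
  mkDerivation ℂ (fun p => ((pa l).toLinearMap ^ (p.2 + 1)) (vard c p.1 P))

/-- The subspace `∂(π₀) + ℂ·1` of `π₀`. -/
def Fzsub (l : ℕ) : Submodule ℂ (Pi0 l) :=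
  LinearMap.range (pa l).toLinearMap ⊔ Submodule.span ℂ {(1 : Pi0 l)}

/-- The space of local functionals `F₀ := π₀ / (∂(π₀) + ℂ·1)`. -/
abbrev Fz (l : ℕ) : Type := Pi0 l ⧸ Fzsub l

namespace LocFun

open Finset

variable {l : ℕ}

abbrev Dl (l : ℕ) : Pi0 l →ₗ[ℂ] Pi0 l := (pa l).toLinearMap
abbrev nDop (l : ℕ) : Pi0 l →ₗ[ℂ] Pi0 l := -(pa l).toLinearMap

lemma nDop_apply (x : Pi0 l) : nDop l x = -(pa l x) := rfl

lemma pa_X (p : Fin l × ℕ) : pa l (X p) = X (p.1, p.2 + 1) := mkDerivation_X _ _ _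

lemma xic_X (c : Matrix (Fin l) (Fin l) ℂ) (P : Pi0 l) (p : Fin l × ℕ) :
    xic c P (X p) = (Dl l ^ (p.2 + 1)) (vard c p.1 P) := mkDerivation_X _ _ _

lemma pderiv_pa_zero (j : Fin l) (F : Pi0 l) :
    pderiv ((j, 0) : Fin l × ℕ) (pa l F) = pa l (pderiv ((j, 0) : Fin l × ℕ) F) := by
  have h : ⁅(pderiv ((j, 0) : Fin l × ℕ) : Derivation ℂ (Pi0 l) (Pi0 l)), pa l⁆ = 0 := by
    apply derivation_ext
    intro p
    rw [Derivation.commutator_apply, pa_X]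
    classical
    rw [pderiv_X, pderiv_X]
    simp only [Pi.single_apply]
    split_ifs with h1 h2 <;>
      simp_all [Prod.ext_iff]
  have := congrArg (fun d : Derivation ℂ (Pi0 l) (Pi0 l) => d F) h
  simp only [Derivation.commutator_apply] at this
  simpa [sub_eq_zero] using this

lemma pderiv_pa_succ (j : Fin l) (n : ℕ) (F : Pi0 l) :
    pderiv ((j, n + 1) : Fin l × ℕ) (pa l F)
      = pa l (pderiv ((j, n + 1) : Fin l × ℕ) F) + pderiv ((j, n) : Fin l × ℕ) F := by
  have h : ⁅(pderiv ((j, n + 1) : Fin l × ℕ) : Derivation ℂ (Pi0 l) (Pi0 l)), pa l⁆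
      = pderiv ((j, n) : Fin l × ℕ) := by
    apply derivation_ext
    intro p
    rw [Derivation.commutator_apply, pa_X]
    classical
    rw [pderiv_X, pderiv_X, pderiv_X]
    simp only [Pi.single_apply]
    split_ifs with h1 h2 h3 <;>
      simp_all [Prod.ext_iff]
  have := congrArg (fun d : Derivation ℂ (Pi0 l) (Pi0 l) => d F) h
  simp only [Derivation.commutator_apply] at this
  linear_combination (norm := ring_nf) this

lemma pderiv_comm (p q : Fin l × ℕ) (F : Pi0 l) :
    pderiv p (pderiv q F) = pderiv q (pderiv p F) := by
  have h : ⁅(pderiv p : Derivation ℂ (Pi0 l) (Pi0 l)), (pderiv q : Derivation ℂ (Pi0 l) (Pi0 l))⁆ = 0 := by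
    apply derivation_ext
    intro r
    classical
    rw [Derivation.commutator_apply, pderiv_X, pderiv_X]
    simp only [Pi.single_apply]
    split_ifs <;> simp
  have := congrArg (fun d : Derivation ℂ (Pi0 l) (Pi0 l) => d F) h
  simp only [Derivation.commutator_apply] at this
  simpa [sub_eq_zero] using this

/-- Bound predicate: all partials of index `≥ N` vanish. -/
def Bnd (N : ℕ) (F : Pi0 l) : Prop :=
  ∀ (j : Fin l) (n : ℕ), N ≤ n → pderiv ((j, n) : Fin l × ℕ) F = 0

lemma pderiv_ne_zero_of_mem_vars {p : Fin l × ℕ} {F : Pi0 l} (h : p ∈ F.vars) :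
    pderiv p F ≠ 0 := by
  classical
  obtain ⟨m, hm, hpm⟩ := (mem_vars p).mp h
  have hmp : m p ≠ 0 := Finsupp.mem_support_iff.mp hpm
  have hle : Finsupp.single p 1 ≤ m := Finsupp.single_le_iff.mpr (Nat.one_le_iff_ne_zero.mpr hmp)
  have hk : m - Finsupp.single p 1 + Finsupp.single p 1 = m := tsub_add_cancel_of_le hle
  have hco : coeff (m - Finsupp.single p 1) (pderiv p F) = coeff m F * (m p : ℂ) := by
    conv_lhs => rw [F.as_sum]
    rw [map_sum, coeff_sum]
    simp only [pderiv_monomial, coeff_monomial]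
    rw [Finset.sum_eq_single_of_mem m hm]
    · simp
    · intro m' hm' hne
      split_ifs with he
      · rcases Nat.eq_zero_or_pos (m' p) with h0 | h0
        · simp [h0]
        · exfalso
          apply hne
          have hle' : Finsupp.single p 1 ≤ m' := Finsupp.single_le_iff.mpr h0
          have := tsub_add_cancel_of_le hle'
          rw [← this, he, hk]
      · rfl
  intro hz
  rw [hz] at hco
  simp only [coeff_zero] at hco
  have : coeff m F ≠ 0 := mem_support_iff.mp hm
  exact this (by
    rcases mul_eq_zero.mp hco.symm with h1 | h1
    · exact h1
    · exact absurd (Nat.cast_eq_zero.mp h1) hmp)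

lemma bnd_iff {N : ℕ} {F : Pi0 l} : Bnd N F ↔ ∀ p ∈ F.vars, p.2 < N := by
  constructor
  · intro h p hp
    by_contra hn
    exact pderiv_ne_zero_of_mem_vars hp (h p.1 p.2 (Nat.le_of_not_lt hn))
  · intro h j n hn
    apply pderiv_eq_zero_of_notMem_vars
    intro hmem
    exact Nat.lt_irrefl n (Nat.lt_of_lt_of_le (h _ hmem) hn)

lemma bnd_exists (F : Pi0 l) : ∃ N, Bnd N F := by
  refine ⟨(F.vars.sup fun p => p.2) + 1, bnd_iff.mpr fun p hp => ?_⟩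
  exact Nat.lt_succ_of_le (Finset.le_sup (f := fun p : Fin l × ℕ => p.2) hp)

namespace Bnd

lemma mono {N M : ℕ} {F : Pi0 l} (h : Bnd N F) (hNM : N ≤ M) : Bnd M F :=
  fun j n hn => h j n (le_trans hNM hn)

lemma zero {N : ℕ} : Bnd N (0 : Pi0 l) := fun _ _ _ => map_zero _

lemma add {N : ℕ} {F G : Pi0 l} (hF : Bnd N F) (hG : Bnd N G) : Bnd N (F + G) :=
  fun j n hn => by rw [map_add, hF j n hn, hG j n hn, add_zero]

lemma smul {N : ℕ} {t : ℂ} {F : Pi0 l} (hF : Bnd N F) : Bnd N (t • F) :=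
  fun j n hn => by rw [Derivation.map_smul, hF j n hn, smul_zero]

lemma neg {N : ℕ} {F : Pi0 l} (hF : Bnd N F) : Bnd N (-F) :=
  fun j n hn => by rw [map_neg, hF j n hn, neg_zero]

lemma mul {N : ℕ} {F G : Pi0 l} (hF : Bnd N F) (hG : Bnd N G) : Bnd N (F * G) :=
  fun j n hn => by
    rw [Derivation.leibniz, hF j n hn, hG j n hn, smul_zero, smul_zero, add_zero]

lemma sum {N : ℕ} {α : Type*} {s : Finset α} {f : α → Pi0 l}
    (h : ∀ a ∈ s, Bnd N (f a)) : Bnd N (∑ a ∈ s, f a) := by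
  classical
  induction s using Finset.induction_on with
  | empty => simpa using zero
  | insert _ _ hnot ih =>
    rw [Finset.sum_insert hnot]
    exact (h _ (Finset.mem_insert_self _ _)).add
      (ih fun a ha => h a (Finset.mem_insert_of_mem ha))

lemma pa {N : ℕ} {F : Pi0 l} (hF : Bnd N F) : Bnd (N + 1) (_root_.pa l F) := by
  intro j n hn
  match n, hn with
  | n + 1, hn =>
    rw [pderiv_pa_succ, hF j (n + 1) (by omega), hF j n (by omega), map_zero, add_zero]

lemma pd {N : ℕ} {F : Pi0 l} (hF : Bnd N F) (p : Fin l × ℕ) : Bnd N (MvPolynomial.pderiv p F) :=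
  fun j n hn => by rw [pderiv_comm, hF j n hn, map_zero]

lemma ndop {N : ℕ} {F : Pi0 l} (hF : Bnd N F) : Bnd (N + 1) (nDop l F) := by
  have : nDop l F = -(_root_.pa l F) := rfl
  rw [this]; exact hF.pa.neg

lemma dpow {N : ℕ} {F : Pi0 l} (hF : Bnd N F) (m : ℕ) : Bnd (N + m) ((Dl l ^ m) F) := by
  induction m with
  | zero => simpa using hF
  | succ m ih =>
    have : (Dl l ^ (m + 1)) F = _root_.pa l ((Dl l ^ m) F) := by
      rw [pow_succ']; rfl
    rw [this]
    exact ih.pa.mono (by omega)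

lemma ndpow {N : ℕ} {F : Pi0 l} (hF : Bnd N F) (m : ℕ) : Bnd (N + m) (((nDop l) ^ m) F) := by
  induction m with
  | zero => simpa using hF
  | succ m ih =>
    have : ((nDop l) ^ (m + 1)) F = nDop l (((nDop l) ^ m) F) := by
      rw [pow_succ']; rfl
    rw [this]
    exact ih.ndop.mono (by omega)

end Bnd

/-- Truncated Euler operator. -/
def Eop (j : Fin l) (N : ℕ) (F : Pi0 l) : Pi0 l :=
  ∑ n ∈ range N, ((nDop l) ^ n) (pderiv ((j, n) : Fin l × ℕ) F)

lemma Eop_stab {N : ℕ} {F : Pi0 l} (h : Bnd N F) {M : ℕ} (hM : N ≤ M) (j : Fin l) :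
    Eop j M F = Eop j N F := by
  refine (Finset.sum_subset (Finset.range_subset_range.mpr hM) fun n _ hn => ?_).symm
  rw [h j n (by simpa using hn), map_zero]

lemma finsum_eq_Eop {N : ℕ} {F : Pi0 l} (h : Bnd N F) (j : Fin l) :
    (∑ᶠ n : ℕ, ((nDop l) ^ n) (pderiv ((j, n) : Fin l × ℕ) F)) = Eop j N F := by
  apply finsum_eq_sum_of_support_subset
  intro n hn
  simp only [Function.mem_support] at hn
  simp only [Finset.coe_range, Set.mem_Iio]
  by_contra hc
  exact hn (by rw [h j n (by omega), map_zero])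

lemma vard_eq (c : Matrix (Fin l) (Fin l) ℂ) (i : Fin l) {F : Pi0 l} {N : ℕ} (h : Bnd N F) :
    vard c i F = ∑ j : Fin l, c i j • Eop j N F := by
  unfold vard
  refine Finset.sum_congr rfl fun j _ => ?_
  rw [finsum_eq_Eop h j]

lemma Bnd.eop {N : ℕ} {F : Pi0 l} (hF : Bnd N F) (j : Fin l) : Bnd (N + N) (Eop j N F) :=
  Bnd.sum fun n hn => ((hF.pd _).ndpow n).mono (by simp at hn; omega)

lemma Bnd.vard {N : ℕ} {F : Pi0 l} (hF : Bnd N F) (c : Matrix (Fin l) (Fin l) ℂ) (i : Fin l) :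
    Bnd (N + N) (vard c i F) := by
  rw [vard_eq c i hF]
  exact Bnd.sum fun j _ => (hF.eop j).smul

/-! ### Sequence operators -/

def sh (f : ℕ → Pi0 l) : ℕ → Pi0 l
  | 0 => 0
  | n + 1 => f n

def Top (f : ℕ → Pi0 l) : ℕ → Pi0 l := fun n => _root_.pa l (f n) + sh f n

def Bop (f : ℕ → Pi0 l) : ℕ → Pi0 l := fun n => nDop l (f n) - sh f n

def SB (N : ℕ) (f : ℕ → Pi0 l) : Prop := ∀ n, N ≤ n → f n = 0

lemma SB.top {N : ℕ} {f : ℕ → Pi0 l} (h : SB N f) : SB (N + 1) (Top f) := by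
  intro n hn
  match n, hn with
  | n + 1, hn =>
    show _root_.pa l (f (n + 1)) + f n = 0
    rw [h (n + 1) (by omega), h n (by omega), map_zero, add_zero]

lemma SB.bop {N : ℕ} {f : ℕ → Pi0 l} (h : SB N f) : SB (N + 1) (Bop f) := by
  intro n hn
  match n, hn with
  | n + 1, hn =>
    show nDop l (f (n + 1)) - f n = 0
    rw [h (n + 1) (by omega), h n (by omega), map_zero, sub_zero]

lemma SB.pdseq {N : ℕ} {F : Pi0 l} (h : Bnd N F) (j : Fin l) :
    SB N (fun n => pderiv ((j, n) : Fin l × ℕ) F) := fun n hn => h j n hn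

lemma pdseq_pa (j : Fin l) (F : Pi0 l) :
    (fun n => pderiv ((j, n) : Fin l × ℕ) (_root_.pa l F))
      = Top (fun n => pderiv ((j, n) : Fin l × ℕ) F) := by
  funext n
  cases n with
  | zero => simpa [Top, sh] using pderiv_pa_zero j F
  | succ n => simpa [Top, sh] using pderiv_pa_succ j n F

lemma pdseq_nd (j : Fin l) (F : Pi0 l) :
    (fun n => pderiv ((j, n) : Fin l × ℕ) (nDop l F))
      = Bop (fun n => pderiv ((j, n) : Fin l × ℕ) F) := by
  funext n
  have hD : nDop l F = -(_root_.pa l F) := rfl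
  cases n with
  | zero =>
    show pderiv _ (nDop l F) = nDop l (pderiv ((j, 0) : Fin l × ℕ) F) - sh _ 0
    rw [hD, map_neg, pderiv_pa_zero, nDop_apply]
    show _ = _ - (0 : Pi0 l)
    rw [sub_zero]
  | succ n =>
    show pderiv _ (nDop l F)
        = nDop l (pderiv ((j, n + 1) : Fin l × ℕ) F) - pderiv ((j, n) : Fin l × ℕ) F
    rw [hD, map_neg, pderiv_pa_succ, neg_add, nDop_apply, sub_eq_add_neg]

lemma pdseq_dpow (j : Fin l) (F : Pi0 l) (m : ℕ) :
    (fun n => pderiv ((j, n) : Fin l × ℕ) ((Dl l ^ m) F))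
      = Top^[m] (fun n => pderiv ((j, n) : Fin l × ℕ) F) := by
  induction m with
  | zero => simp
  | succ m ih =>
    have h1 : (Dl l ^ (m + 1)) F = _root_.pa l ((Dl l ^ m) F) := by rw [pow_succ']; rfl
    rw [Function.iterate_succ_apply', ← ih, ← pdseq_pa]
    funext n
    rw [h1]

lemma pdseq_ndpow (j : Fin l) (F : Pi0 l) (m : ℕ) :
    (fun n => pderiv ((j, n) : Fin l × ℕ) (((nDop l) ^ m) F))
      = Bop^[m] (fun n => pderiv ((j, n) : Fin l × ℕ) F) := by
  induction m with
  | zero => simp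
  | succ m ih =>
    have h1 : ((nDop l) ^ (m + 1)) F = nDop l (((nDop l) ^ m) F) := by rw [pow_succ']; rfl
    rw [Function.iterate_succ_apply', ← ih, ← pdseq_nd]
    funext n
    rw [h1]

/-- shift summation lemma -/
lemma sum_sh {f : ℕ → Pi0 l} {N M : ℕ} (hf : SB N f) (hM : N + 1 ≤ M)
    (g : ℕ → Pi0 l → Pi0 l) (hg : ∀ n, g n 0 = 0) :
    ∑ n ∈ range M, g n (sh f n) = ∑ n ∈ range M, g (n + 1) (f n) := by
  obtain ⟨M', rfl⟩ : ∃ M', M = M' + 1 := ⟨M - 1, by omega⟩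
  rw [Finset.sum_range_succ' (fun n => g n (sh f n)), Finset.sum_range_succ (fun n => g (n + 1) (f n))]
  show (∑ n ∈ range M', g (n + 1) (f n)) + g 0 0 = _
  rw [hg 0, hf M' (by omega), hg (M' + 1), add_zero]

lemma pa_mul (a b : Pi0 l) : _root_.pa l (a * b) = _root_.pa l a * b + a * _root_.pa l b := by
  rw [Derivation.leibniz]
  ring_nf

lemma KB_top {f : ℕ → Pi0 l} (W : Pi0 l) {N M : ℕ} (hf : SB N f) (hM : N + 1 ≤ M) :
    ∑ n ∈ range M, ((nDop l) ^ n) (Top f n * W)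
      = ∑ n ∈ range M, ((nDop l) ^ n) (f n * nDop l W) := by
  have split : ∀ n, Top f n * W = _root_.pa l (f n) * W + sh f n * W := by
    intro n; rw [Top]; ring
  calc ∑ n ∈ range M, ((nDop l) ^ n) (Top f n * W)
      = ∑ n ∈ range M, (((nDop l) ^ n) (_root_.pa l (f n) * W)
          + ((nDop l) ^ n) (sh f n * W)) := by
        refine Finset.sum_congr rfl fun n _ => ?_
        rw [split, map_add]
    _ = ∑ n ∈ range M, ((nDop l) ^ n) (_root_.pa l (f n) * W)
          + ∑ n ∈ range M, ((nDop l) ^ n) (sh f n * W) := Finset.sum_add_distrib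
    _ = ∑ n ∈ range M, ((nDop l) ^ n) (_root_.pa l (f n) * W)
          + ∑ n ∈ range M, ((nDop l) ^ (n + 1)) (f n * W) := by
        rw [sum_sh hf hM (fun n x => ((nDop l) ^ n) (x * W))
          (fun n => by simp)]
    _ = ∑ n ∈ range M, ((nDop l) ^ n) (f n * nDop l W) := by
        rw [← Finset.sum_add_distrib]
        refine Finset.sum_congr rfl fun n _ => ?_
        have h1 : ((nDop l) ^ (n + 1)) (f n * W) = ((nDop l) ^ n) (nDop l (f n * W)) := by
          rw [pow_succ]; rfl
        have h2 : nDop l (f n * W) = -(_root_.pa l (f n) * W) - f n * _root_.pa l W := by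
          show -(_root_.pa l (f n * W)) = _
          rw [pa_mul]; ring
        rw [h1, h2, ← map_add]
        congr 1
        have h3 : nDop l W = -(_root_.pa l W) := rfl
        rw [h3]; ring

lemma KB_bop {f : ℕ → Pi0 l} (W : Pi0 l) {N M : ℕ} (hf : SB N f) (hM : N + 1 ≤ M) :
    ∑ n ∈ range M, ((nDop l) ^ n) (Bop f n * W)
      = ∑ n ∈ range M, ((nDop l) ^ n) (f n * _root_.pa l W) := by
  have split : ∀ n, Bop f n * W = nDop l (f n) * W - sh f n * W := by
    intro n; rw [Bop]; ring
  calc ∑ n ∈ range M, ((nDop l) ^ n) (Bop f n * W)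
      = ∑ n ∈ range M, (((nDop l) ^ n) (nDop l (f n) * W)
          - ((nDop l) ^ n) (sh f n * W)) := by
        refine Finset.sum_congr rfl fun n _ => ?_
        rw [split, map_sub]
    _ = ∑ n ∈ range M, ((nDop l) ^ n) (nDop l (f n) * W)
          - ∑ n ∈ range M, ((nDop l) ^ n) (sh f n * W) := Finset.sum_sub_distrib _ _
    _ = ∑ n ∈ range M, ((nDop l) ^ n) (nDop l (f n) * W)
          - ∑ n ∈ range M, ((nDop l) ^ (n + 1)) (f n * W) := by
        rw [sum_sh hf hM (fun n x => ((nDop l) ^ n) (x * W))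
          (fun n => by simp)]
    _ = ∑ n ∈ range M, ((nDop l) ^ n) (f n * _root_.pa l W) := by
        rw [← Finset.sum_sub_distrib]
        refine Finset.sum_congr rfl fun n _ => ?_
        have h1 : ((nDop l) ^ (n + 1)) (f n * W) = ((nDop l) ^ n) (nDop l (f n * W)) := by
          rw [pow_succ]; rfl
        have h2 : nDop l (f n * W) = -(_root_.pa l (f n) * W) - f n * _root_.pa l W := by
          show -(_root_.pa l (f n * W)) = _
          rw [pa_mul]; ring
        rw [h1, h2, ← map_sub]
        congr 1
        have h3 : nDop l (f n) = -(_root_.pa l (f n)) := rfl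
        rw [h3]; ring


lemma SB.top_pow {N : ℕ} {f : ℕ → Pi0 l} (h : SB N f) (m : ℕ) : SB (N + m) (Top^[m] f) := by
  induction m with
  | zero => simpa using h
  | succ m ih => rw [Function.iterate_succ_apply']; exact ih.top

lemma SB.bop_pow {N : ℕ} {f : ℕ → Pi0 l} (h : SB N f) (m : ℕ) : SB (N + m) (Bop^[m] f) := by
  induction m with
  | zero => simpa using h
  | succ m ih => rw [Function.iterate_succ_apply']; exact ih.bop

lemma KB_top_pow (m : ℕ) {f : ℕ → Pi0 l} (W : Pi0 l) {N M : ℕ} (hf : SB N f)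
    (hM : N + m + 1 ≤ M) :
    ∑ n ∈ range M, ((nDop l) ^ n) (Top^[m] f n * W)
      = ∑ n ∈ range M, ((nDop l) ^ n) (f n * ((nDop l) ^ m) W) := by
  induction m generalizing W with
  | zero => simp
  | succ m ih =>
    have h1 : Top^[m + 1] f = Top (Top^[m] f) := Function.iterate_succ_apply' Top m f
    rw [h1, KB_top W (hf.top_pow m) (by omega), ih (nDop l W) (by omega)]
    exact Finset.sum_congr rfl fun n _ => by congr 1

lemma KB_bop_pow (m : ℕ) {f : ℕ → Pi0 l} (W : Pi0 l) {N M : ℕ} (hf : SB N f)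
    (hM : N + m + 1 ≤ M) :
    ∑ n ∈ range M, ((nDop l) ^ n) (Bop^[m] f n * W)
      = ∑ n ∈ range M, ((nDop l) ^ n) (f n * ((Dl l) ^ m) W) := by
  induction m generalizing W with
  | zero => simp
  | succ m ih =>
    have h1 : Bop^[m + 1] f = Bop (Bop^[m] f) := Function.iterate_succ_apply' Bop m f
    rw [h1, KB_bop W (hf.bop_pow m) (by omega), ih (_root_.pa l W) (by omega)]
    exact Finset.sum_congr rfl fun n _ => by congr 1

lemma Pd_bop {f : ℕ → Pi0 l} (W : Pi0 l) {N M : ℕ} (hf : SB N f) (hM : N + 1 ≤ M) :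
    ∑ m ∈ range M, (Bop f m * ((Dl l) ^ m) W)
      = nDop l (∑ m ∈ range M, f m * ((Dl l) ^ m) W) := by
  rw [map_sum]
  have split : ∀ m, Bop f m * ((Dl l) ^ m) W
      = nDop l (f m) * ((Dl l) ^ m) W - sh f m * ((Dl l) ^ m) W := by
    intro m; rw [Bop]; ring
  calc ∑ m ∈ range M, (Bop f m * ((Dl l) ^ m) W)
      = ∑ m ∈ range M, (nDop l (f m) * ((Dl l) ^ m) W)
          - ∑ m ∈ range M, (sh f m * ((Dl l) ^ m) W) := by
        rw [← Finset.sum_sub_distrib]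
        exact Finset.sum_congr rfl fun m _ => split m
    _ = ∑ m ∈ range M, (nDop l (f m) * ((Dl l) ^ m) W)
          - ∑ m ∈ range M, (f m * ((Dl l) ^ (m + 1)) W) := by
        rw [sum_sh hf hM (fun m x => x * ((Dl l) ^ m) W) (fun m => zero_mul _)]
    _ = ∑ m ∈ range M, nDop l (f m * ((Dl l) ^ m) W) := by
        rw [← Finset.sum_sub_distrib]
        refine Finset.sum_congr rfl fun m _ => ?_
        have h1 : nDop l (f m * ((Dl l) ^ m) W)
            = -(_root_.pa l (f m) * ((Dl l) ^ m) W) - f m * _root_.pa l (((Dl l) ^ m) W) := by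
          show -(_root_.pa l _) = _
          rw [pa_mul]; ring
        have h2 : _root_.pa l (((Dl l) ^ m) W) = ((Dl l) ^ (m + 1)) W := by
          rw [pow_succ']; rfl
        have h3 : nDop l (f m) = -(_root_.pa l (f m)) := rfl
        rw [h1, h2, h3]; ring

lemma Pd_bop_pow (t : ℕ) {f : ℕ → Pi0 l} (W : Pi0 l) {N M : ℕ} (hf : SB N f)
    (hM : N + t + 1 ≤ M) :
    ∑ m ∈ range M, (Bop^[t] f m * ((Dl l) ^ m) W)
      = ((nDop l) ^ t) (∑ m ∈ range M, f m * ((Dl l) ^ m) W) := by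
  induction t with
  | zero => simp
  | succ t ih =>
    have h1 : Bop^[t + 1] f = Bop (Bop^[t] f) := Function.iterate_succ_apply' Bop t f
    rw [h1, Pd_bop W (hf.bop_pow t) (by omega), ih (by omega), pow_succ']
    rfl

/-! ### Consequences for `Eop` and `vard` -/

lemma Eop_pa {N : ℕ} {F : Pi0 l} (h : Bnd N F) (j : Fin l) {M : ℕ} (hM : N + 1 ≤ M) :
    Eop j M (_root_.pa l F) = 0 := by
  unfold Eop
  have h1 : ∀ n : ℕ, pderiv ((j, n) : Fin l × ℕ) (_root_.pa l F)
      = Top (fun n => pderiv ((j, n) : Fin l × ℕ) F) n :=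
    fun n => congrFun (pdseq_pa j F) n
  calc ∑ n ∈ range M, ((nDop l) ^ n) (pderiv ((j, n) : Fin l × ℕ) (_root_.pa l F))
      = ∑ n ∈ range M, ((nDop l) ^ n)
          (Top (fun n => pderiv ((j, n) : Fin l × ℕ) F) n * 1) := by
        refine Finset.sum_congr rfl fun n _ => ?_
        rw [h1 n, mul_one]
    _ = ∑ n ∈ range M, ((nDop l) ^ n)
          ((pderiv ((j, n) : Fin l × ℕ) F) * nDop l 1) := KB_top 1 (SB.pdseq h j) hM
    _ = 0 := by
        have : nDop l (1 : Pi0 l) = 0 := by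
          show -(_root_.pa l 1) = 0
          rw [(pa l).map_one_eq_zero, neg_zero]
        rw [this]
        simp

lemma vard_pa (c : Matrix (Fin l) (Fin l) ℂ) (i : Fin l) (F : Pi0 l) :
    vard c i (_root_.pa l F) = 0 := by
  obtain ⟨N, hN⟩ := bnd_exists F
  rw [vard_eq c i hN.pa]
  refine Finset.sum_eq_zero fun j _ => ?_
  rw [Eop_pa hN j (le_refl _), smul_zero]

lemma vard_one (c : Matrix (Fin l) (Fin l) ℂ) (i : Fin l) : vard c i (1 : Pi0 l) = 0 := by
  have h : Bnd 0 (1 : Pi0 l) := fun j n _ => pderiv_one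
  rw [vard_eq c i h]
  simp [Eop]

lemma vard_add (c : Matrix (Fin l) (Fin l) ℂ) (i : Fin l) (P P' : Pi0 l) :
    vard c i (P + P') = vard c i P + vard c i P' := by
  obtain ⟨N, hN⟩ := bnd_exists P
  obtain ⟨N', hN'⟩ := bnd_exists P'
  rw [vard_eq c i ((hN.mono (le_max_left N N')).add (hN'.mono (le_max_right N N'))),
    vard_eq c i (hN.mono (le_max_left N N')), vard_eq c i (hN'.mono (le_max_right N N')),
    ← Finset.sum_add_distrib]
  refine Finset.sum_congr rfl fun j _ => ?_
  rw [← smul_add]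
  congr 1
  unfold Eop
  rw [← Finset.sum_add_distrib]
  exact Finset.sum_congr rfl fun n _ => by rw [map_add, map_add]

lemma vard_smul (c : Matrix (Fin l) (Fin l) ℂ) (i : Fin l) (t : ℂ) (P : Pi0 l) :
    vard c i (t • P) = t • vard c i P := by
  obtain ⟨N, hN⟩ := bnd_exists P
  rw [vard_eq c i hN.smul, vard_eq c i hN, Finset.smul_sum]
  refine Finset.sum_congr rfl fun j _ => ?_
  rw [smul_comm]
  congr 1
  unfold Eop
  rw [Finset.smul_sum]
  exact Finset.sum_congr rfl fun n _ => by rw [Derivation.map_smul, map_smul]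

lemma pa_mem_range (x : Pi0 l) : _root_.pa l x ∈ LinearMap.range (Dl l) := ⟨x, rfl⟩

lemma ibp (m : ℕ) (q w : Pi0 l) :
    (Dl l ^ m) q * w - q * ((nDop l ^ m) w) ∈ LinearMap.range (Dl l) := by
  induction m generalizing q with
  | zero => simp
  | succ m ih =>
    have h1 : (Dl l ^ (m + 1)) q = (Dl l ^ m) (_root_.pa l q) := by rw [pow_succ]; rfl
    have h2 : ((nDop l) ^ (m + 1)) w = -(_root_.pa l (((nDop l) ^ m) w)) := by
      rw [pow_succ']; rfl
    have key : (Dl l ^ (m + 1)) q * w - q * ((nDop l ^ (m + 1)) w)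
        = ((Dl l ^ m) (_root_.pa l q) * w - _root_.pa l q * ((nDop l ^ m) w))
          + _root_.pa l (q * ((nDop l ^ m) w)) := by
      rw [h1, h2, pa_mul]; ring
    rw [key]
    exact Submodule.add_mem _ (ih (_root_.pa l q)) (pa_mem_range _)

/-! ### Chain rule -/

lemma deriv_eq_sum (d : Derivation ℂ (Pi0 l) (Pi0 l)) {F : Pi0 l} {N : ℕ} (hF : Bnd N F) :
    d F = ∑ p ∈ Finset.univ ×ˢ range N, pderiv p F * d (X p) := by
  classical
  have hmem : F ∈ Algebra.adjoin ℂ ((X : Fin l × ℕ → Pi0 l) ''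
      ((Finset.univ ×ˢ range N : Finset (Fin l × ℕ)) : Set (Fin l × ℕ))) := by
    rw [← supported_eq_adjoin_X, mem_supported]
    intro p hp
    have h2 := bnd_iff.mp hF p hp
    simp [Finset.mem_coe, Finset.mem_product, h2]
  clear hF
  induction hmem using Algebra.adjoin_induction with
  | mem x hx =>
      obtain ⟨q, hq, rfl⟩ := hx
      have hqS : q ∈ Finset.univ ×ˢ range N := by
        simpa using hq
      rw [Finset.sum_eq_single_of_mem q hqS]
      · rw [pderiv_X_self, one_mul]
      · intro p hp hne
        rw [pderiv_X_of_ne (Ne.symm hne), zero_mul]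
  | algebraMap r =>
      rw [Derivation.map_algebraMap]
      rw [show (algebraMap ℂ (Pi0 l) r) = C r from rfl]
      simp [pderiv_C]
  | add x y hx hy ihx ihy =>
      rw [map_add, ihx, ihy, ← Finset.sum_add_distrib]
      exact Finset.sum_congr rfl fun p _ => by rw [map_add, add_mul]
  | mul x y hx hy ihx ihy =>
      rw [Derivation.leibniz, smul_eq_mul, smul_eq_mul, ihx, ihy,
        Finset.mul_sum, Finset.mul_sum, ← Finset.sum_add_distrib]
      refine Finset.sum_congr rfl fun p _ => ?_
      rw [Derivation.leibniz, smul_eq_mul, smul_eq_mul]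
      ring

/-! ### Lemmas about `xic` -/

lemma xic_apply (c : Matrix (Fin l) (Fin l) ℂ) (P : Pi0 l) {R : Pi0 l} {N : ℕ}
    (hR : Bnd N R) :
    xic c P R = ∑ k : Fin l, ∑ m ∈ range N,
      pderiv ((k, m) : Fin l × ℕ) R * (Dl l ^ m) (_root_.pa l (vard c k P)) := by
  rw [deriv_eq_sum (xic c P) hR, Finset.sum_product]
  refine Finset.sum_congr rfl fun k _ => Finset.sum_congr rfl fun m _ => ?_
  rw [xic_X]
  congr 1

lemma xic_pa (c : Matrix (Fin l) (Fin l) ℂ) (P F : Pi0 l) :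
    xic c P (_root_.pa l F) = _root_.pa l (xic c P F) := by
  have h : ⁅(xic c P : Derivation ℂ (Pi0 l) (Pi0 l)), pa l⁆ = 0 := by
    apply derivation_ext
    intro p
    rw [Derivation.commutator_apply, pa_X, xic_X, xic_X]
    show (Dl l ^ (p.2 + 1 + 1)) (vard c p.1 P)
        - _root_.pa l ((Dl l ^ (p.2 + 1)) (vard c p.1 P))
        = (0 : Derivation ℂ (Pi0 l) (Pi0 l)) (X p)
    have h0 : (0 : Derivation ℂ (Pi0 l) (Pi0 l)) (X p) = 0 := rfl
    rw [h0, sub_eq_zero, pow_succ' (Dl l) (p.2 + 1)]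
    rfl
  have := congrArg (fun d : Derivation ℂ (Pi0 l) (Pi0 l) => d F) h
  simp only [Derivation.commutator_apply] at this
  simpa [sub_eq_zero] using this

lemma xic_ndpow (c : Matrix (Fin l) (Fin l) ℂ) (P : Pi0 l) (m : ℕ) (F : Pi0 l) :
    xic c P (((nDop l) ^ m) F) = ((nDop l) ^ m) (xic c P F) := by
  induction m generalizing F with
  | zero => simp
  | succ m ih =>
    have h1 : ∀ G : Pi0 l, ((nDop l) ^ (m + 1)) G = ((nDop l) ^ m) (nDop l G) := by
      intro G; rw [pow_succ]; rfl
    rw [h1, ih, h1]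
    congr 1
    rw [nDop_apply, map_neg, nDop_apply, xic_pa]

lemma xic_add (c : Matrix (Fin l) (Fin l) ℂ) (P P' : Pi0 l) :
    xic c (P + P') = xic c P + xic c P' := by
  apply derivation_ext
  intro p
  rw [Derivation.add_apply, xic_X, xic_X, xic_X, vard_add, map_add]

lemma xic_smul (c : Matrix (Fin l) (Fin l) ℂ) (t : ℂ) (P : Pi0 l) :
    xic c (t • P) = t • xic c P := by
  apply derivation_ext
  intro p
  rw [Derivation.smul_apply, xic_X, xic_X, vard_smul, map_smul]

lemma xic_of_vard_zero (c : Matrix (Fin l) (Fin l) ℂ) (P : Pi0 l)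
    (h : ∀ k, vard c k P = 0) : xic c P = 0 := by
  apply derivation_ext
  intro p
  rw [xic_X, h, map_zero]
  rfl

/-! ### The Olver identity -/

lemma olver (c : Matrix (Fin l) (Fin l) ℂ) {P R : Pi0 l} {N : ℕ}
    (hP : Bnd N P) (hR : Bnd N R) (hv : ∀ k, Bnd N (vard c k P))
    (j : Fin l) {M : ℕ} (hM : 2 * N + 2 ≤ M) :
    Eop j M (xic c P R) = xic c P (Eop j M R)
      + ∑ k : Fin l, ∑ n ∈ range M,
          ((nDop l) ^ n) (pderiv ((j, n) : Fin l × ℕ) (_root_.pa l (vard c k P))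
            * Eop k N R) := by
  set Q : Fin l → Pi0 l := fun k => _root_.pa l (vard c k P) with hQ
  have expand : Eop j M (xic c P R)
      = ∑ k : Fin l, ∑ m ∈ range N, ∑ n ∈ range M,
          ((nDop l) ^ n) (pderiv ((j, n) : Fin l × ℕ)
            (pderiv ((k, m) : Fin l × ℕ) R * (Dl l ^ m) (Q k))) := by
    unfold Eop
    rw [xic_apply c P hR]
    simp only [map_sum]
    rw [Finset.sum_comm]
    exact Finset.sum_congr rfl fun k _ => Finset.sum_comm
  have leib : ∀ (k : Fin l) (m n : ℕ),
      ((nDop l) ^ n) (pderiv ((j, n) : Fin l × ℕ)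
          (pderiv ((k, m) : Fin l × ℕ) R * (Dl l ^ m) (Q k)))
        = ((nDop l) ^ n) (pderiv ((j, n) : Fin l × ℕ) ((Dl l ^ m) (Q k))
            * pderiv ((k, m) : Fin l × ℕ) R)
          + ((nDop l) ^ n) (pderiv ((j, n) : Fin l × ℕ) (pderiv ((k, m) : Fin l × ℕ) R)
            * (Dl l ^ m) (Q k)) := by
    intro k m n
    rw [← map_add]
    congr 1
    rw [Derivation.leibniz, smul_eq_mul, smul_eq_mul]
    ring
  have hSA : ∀ k : Fin l, ∀ m ∈ range N,
      (∑ n ∈ range M, ((nDop l) ^ n) (pderiv ((j, n) : Fin l × ℕ) ((Dl l ^ m) (Q k))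
          * pderiv ((k, m) : Fin l × ℕ) R))
        = ∑ n ∈ range M, ((nDop l) ^ n) (pderiv ((j, n) : Fin l × ℕ) (Q k)
            * ((nDop l) ^ m) (pderiv ((k, m) : Fin l × ℕ) R)) := by
    intro k m hm
    have h1 : ∀ n : ℕ, pderiv ((j, n) : Fin l × ℕ) ((Dl l ^ m) (Q k))
        = Top^[m] (fun n => pderiv ((j, n) : Fin l × ℕ) (Q k)) n :=
      fun n => congrFun (pdseq_dpow j (Q k) m) n
    have hfb : SB (N + 1) (fun n => pderiv ((j, n) : Fin l × ℕ) (Q k)) :=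
      SB.pdseq (hv k).pa j
    calc (∑ n ∈ range M, ((nDop l) ^ n) (pderiv ((j, n) : Fin l × ℕ) ((Dl l ^ m) (Q k))
          * pderiv ((k, m) : Fin l × ℕ) R))
        = ∑ n ∈ range M, ((nDop l) ^ n)
            (Top^[m] (fun n => pderiv ((j, n) : Fin l × ℕ) (Q k)) n
              * pderiv ((k, m) : Fin l × ℕ) R) := by
          exact Finset.sum_congr rfl fun n _ => by rw [h1 n]
      _ = ∑ n ∈ range M, ((nDop l) ^ n) (pderiv ((j, n) : Fin l × ℕ) (Q k)
            * ((nDop l) ^ m) (pderiv ((k, m) : Fin l × ℕ) R)) := by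
          refine KB_top_pow m _ hfb ?_
          simp only [Finset.mem_range] at hm
          omega
  have hmul : ∀ k : Fin l,
      (∑ m ∈ range N, ∑ n ∈ range M, ((nDop l) ^ n) (pderiv ((j, n) : Fin l × ℕ) (Q k)
          * ((nDop l) ^ m) (pderiv ((k, m) : Fin l × ℕ) R)))
        = ∑ n ∈ range M, ((nDop l) ^ n) (pderiv ((j, n) : Fin l × ℕ) (Q k) * Eop k N R) := by
    intro k
    rw [Finset.sum_comm]
    refine Finset.sum_congr rfl fun n _ => ?_
    rw [← map_sum, ← Finset.mul_sum]
    rfl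
  have hSBeq : xic c P (Eop j M R)
      = ∑ k : Fin l, ∑ m ∈ range N, ∑ n ∈ range M,
          ((nDop l) ^ n) (pderiv ((j, n) : Fin l × ℕ) (pderiv ((k, m) : Fin l × ℕ) R)
            * (Dl l ^ m) (Q k)) := by
    unfold Eop
    rw [map_sum]
    calc ∑ n ∈ range M, xic c P (((nDop l) ^ n) (pderiv ((j, n) : Fin l × ℕ) R))
        = ∑ n ∈ range M, ∑ k : Fin l, ∑ m ∈ range N,
            ((nDop l) ^ n) (pderiv ((j, n) : Fin l × ℕ) (pderiv ((k, m) : Fin l × ℕ) R)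
              * (Dl l ^ m) (Q k)) := by
          refine Finset.sum_congr rfl fun n _ => ?_
          rw [xic_ndpow, xic_apply c P (hR.pd ((j, n) : Fin l × ℕ)), map_sum]
          refine Finset.sum_congr rfl fun k _ => ?_
          rw [map_sum]
          refine Finset.sum_congr rfl fun m _ => ?_
          rw [pderiv_comm ((k, m) : Fin l × ℕ)]
      _ = _ := by
          rw [Finset.sum_comm]
          exact Finset.sum_congr rfl fun k _ => Finset.sum_comm
  calc Eop j M (xic c P R)
      = ∑ k : Fin l, ∑ m ∈ range N, ∑ n ∈ range M,
          (((nDop l) ^ n) (pderiv ((j, n) : Fin l × ℕ) ((Dl l ^ m) (Q k))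
              * pderiv ((k, m) : Fin l × ℕ) R)
            + ((nDop l) ^ n) (pderiv ((j, n) : Fin l × ℕ) (pderiv ((k, m) : Fin l × ℕ) R)
              * (Dl l ^ m) (Q k))) := by
        rw [expand]
        exact Finset.sum_congr rfl fun k _ => Finset.sum_congr rfl fun m _ =>
          Finset.sum_congr rfl fun n _ => leib k m n
    _ = (∑ k : Fin l, ∑ m ∈ range N, ∑ n ∈ range M,
          ((nDop l) ^ n) (pderiv ((j, n) : Fin l × ℕ) ((Dl l ^ m) (Q k))
            * pderiv ((k, m) : Fin l × ℕ) R))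
        + ∑ k : Fin l, ∑ m ∈ range N, ∑ n ∈ range M,
          ((nDop l) ^ n) (pderiv ((j, n) : Fin l × ℕ) (pderiv ((k, m) : Fin l × ℕ) R)
            * (Dl l ^ m) (Q k)) := by
        simp only [Finset.sum_add_distrib]
    _ = xic c P (Eop j M R)
        + ∑ k : Fin l, ∑ n ∈ range M,
            ((nDop l) ^ n) (pderiv ((j, n) : Fin l × ℕ) (Q k) * Eop k N R) := by
        rw [hSBeq, add_comm]
        congr 1
        refine Finset.sum_congr rfl fun k _ => ?_
        rw [Finset.sum_congr rfl (hSA k), hmul k]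

/-! ### The Helmholtz identity -/

lemma helm (F w : Pi0 l) {N : ℕ} (hF : Bnd N F) (a b : Fin l) {M : ℕ} (hM : 2 * N + 2 ≤ M) :
    ∑ m ∈ range M, pderiv ((b, m) : Fin l × ℕ) (Eop a N F) * (Dl l ^ m) w
      = ∑ n ∈ range M, ((nDop l) ^ n) (pderiv ((a, n) : Fin l × ℕ) (Eop b N F) * w) := by
  have hNM : N ≤ M := by omega
  set h : ℕ → ℕ → Pi0 l := fun t m =>
    ((nDop l) ^ t) (pderiv ((a, t) : Fin l × ℕ) (pderiv ((b, m) : Fin l × ℕ) F)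
      * (Dl l ^ m) w) with hh
  have hzero1 : ∀ t m, N ≤ t → h t m = 0 := by
    intro t m ht
    simp only [hh]
    rw [(hF.pd ((b, m) : Fin l × ℕ)) a t ht, zero_mul, map_zero]
  have hzero2 : ∀ t m, N ≤ m → h t m = 0 := by
    intro t m hm
    simp only [hh]
    rw [hF b m hm, map_zero, zero_mul, map_zero]
  have lhs_eq : ∑ m ∈ range M, pderiv ((b, m) : Fin l × ℕ) (Eop a N F) * (Dl l ^ m) w
      = ∑ t ∈ range N, ∑ m ∈ range M, h t m := by
    calc ∑ m ∈ range M, pderiv ((b, m) : Fin l × ℕ) (Eop a N F) * (Dl l ^ m) w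
        = ∑ m ∈ range M, ∑ t ∈ range N,
            (Bop^[t] (fun m' => pderiv ((b, m') : Fin l × ℕ)
              (pderiv ((a, t) : Fin l × ℕ) F))) m * (Dl l ^ m) w := by
          refine Finset.sum_congr rfl fun m _ => ?_
          unfold Eop
          rw [map_sum, Finset.sum_mul]
          refine Finset.sum_congr rfl fun t _ => ?_
          congr 1
          exact congrFun (pdseq_ndpow b (pderiv ((a, t) : Fin l × ℕ) F) t) m
      _ = ∑ t ∈ range N, ∑ m ∈ range M,
            (Bop^[t] (fun m' => pderiv ((b, m') : Fin l × ℕ)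
              (pderiv ((a, t) : Fin l × ℕ) F))) m * (Dl l ^ m) w := Finset.sum_comm
      _ = ∑ t ∈ range N, ((nDop l) ^ t) (∑ m ∈ range M,
            pderiv ((b, m) : Fin l × ℕ) (pderiv ((a, t) : Fin l × ℕ) F) * (Dl l ^ m) w) := by
          refine Finset.sum_congr rfl fun t ht => ?_
          refine Pd_bop_pow t w (SB.pdseq (hF.pd _) b) ?_
          simp only [Finset.mem_range] at ht
          omega
      _ = ∑ t ∈ range N, ∑ m ∈ range M, h t m := by
          refine Finset.sum_congr rfl fun t _ => ?_
          rw [map_sum]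
          refine Finset.sum_congr rfl fun m _ => ?_
          simp only [hh]
          rw [pderiv_comm]
  have rhs_eq : ∑ n ∈ range M, ((nDop l) ^ n) (pderiv ((a, n) : Fin l × ℕ) (Eop b N F) * w)
      = ∑ t ∈ range N, ∑ n ∈ range M, h n t := by
    calc ∑ n ∈ range M, ((nDop l) ^ n) (pderiv ((a, n) : Fin l × ℕ) (Eop b N F) * w)
        = ∑ n ∈ range M, ∑ t ∈ range N, ((nDop l) ^ n)
            ((Bop^[t] (fun n' => pderiv ((a, n') : Fin l × ℕ)
              (pderiv ((b, t) : Fin l × ℕ) F))) n * w) := by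
          refine Finset.sum_congr rfl fun n _ => ?_
          unfold Eop
          rw [map_sum, Finset.sum_mul, map_sum]
          refine Finset.sum_congr rfl fun t _ => ?_
          congr 2
          exact congrFun (pdseq_ndpow a (pderiv ((b, t) : Fin l × ℕ) F) t) n
      _ = ∑ t ∈ range N, ∑ n ∈ range M, ((nDop l) ^ n)
            ((Bop^[t] (fun n' => pderiv ((a, n') : Fin l × ℕ)
              (pderiv ((b, t) : Fin l × ℕ) F))) n * w) := Finset.sum_comm
      _ = ∑ t ∈ range N, ∑ n ∈ range M, ((nDop l) ^ n)
            (pderiv ((a, n) : Fin l × ℕ) (pderiv ((b, t) : Fin l × ℕ) F) * (Dl l ^ t) w) := by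
          refine Finset.sum_congr rfl fun t ht => ?_
          refine KB_bop_pow t w (SB.pdseq (hF.pd _) a) ?_
          simp only [Finset.mem_range] at ht
          omega
      _ = ∑ t ∈ range N, ∑ n ∈ range M, h n t := by
          simp only [hh]
  rw [lhs_eq, rhs_eq]
  have ext1 : ∑ t ∈ range N, ∑ m ∈ range M, h t m
      = ∑ t ∈ range M, ∑ m ∈ range M, h t m := by
    apply Finset.sum_subset (Finset.range_subset_range.mpr hNM)
    intro t _ ht
    exact Finset.sum_eq_zero fun m _ => hzero1 t m (by simpa using ht)
  have ext2 : ∑ t ∈ range N, ∑ n ∈ range M, h n t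
      = ∑ t ∈ range M, ∑ n ∈ range M, h n t := by
    apply Finset.sum_subset (Finset.range_subset_range.mpr hNM)
    intro t _ ht
    exact Finset.sum_eq_zero fun n _ => hzero2 n t (by simpa using ht)
  rw [ext1, ext2, Finset.sum_comm]

/-! ### The master identity -/

lemma master (c : Matrix (Fin l) (Fin l) ℂ) (hc : c.IsSymm) (P R : Pi0 l) (i : Fin l) :
    vard c i (xic c P R) = xic c P (vard c i R) - xic c R (vard c i P) := by
  obtain ⟨B, hP, hR, hvP, hvR⟩ : ∃ B, Bnd B P ∧ Bnd B R ∧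
      (∀ k, Bnd B (vard c k P)) ∧ (∀ k, Bnd B (vard c k R)) := by
    obtain ⟨N1, hN1⟩ := bnd_exists P
    obtain ⟨N2, hN2⟩ := bnd_exists R
    exact ⟨(N1 + N2) + (N1 + N2), hN1.mono (by omega), hN2.mono (by omega),
      fun k => (hN1.mono (by omega : N1 ≤ N1 + N2)).vard c k,
      fun k => (hN2.mono (by omega : N2 ≤ N1 + N2)).vard c k⟩
  obtain ⟨M, hMx, hM⟩ : ∃ M, Bnd M (xic c P R) ∧ 2 * B + 2 ≤ M := by
    obtain ⟨M0, hM0⟩ := bnd_exists (xic c P R)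
    exact ⟨M0 + (2 * B + 2), hM0.mono (by omega), by omega⟩
  have hBM : B ≤ M := by omega
  set E2 : Fin l → Fin l → Fin l → Pi0 l := fun j j' k =>
    ∑ n ∈ range M, ((nDop l) ^ n) (pderiv ((j, n) : Fin l × ℕ) (Eop j' B P)
      * nDop l (Eop k B R)) with hE2
  set Qq : Fin l → Fin l → Fin l → Pi0 l := fun j k j' =>
    ∑ n ∈ range M, ((nDop l) ^ n) (pderiv ((j, n) : Fin l × ℕ) (Eop k B P)
      * _root_.pa l (Eop j' B R)) with hQq
  -- Step 1 : left-hand side via Olver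
  have lhs2 : vard c i (xic c P R)
      = (∑ j : Fin l, c i j • xic c P (Eop j M R))
        + ∑ j : Fin l, c i j • (∑ k : Fin l, ∑ n ∈ range M,
            ((nDop l) ^ n) (pderiv ((j, n) : Fin l × ℕ) (_root_.pa l (vard c k P))
              * Eop k B R)) := by
    rw [vard_eq c i hMx, ← Finset.sum_add_distrib]
    refine Finset.sum_congr rfl fun j _ => ?_
    rw [olver c hP hR hvP j hM, smul_add]
  -- Step 2 : first right-hand term
  have rhs1 : xic c P (vard c i R) = ∑ j : Fin l, c i j • xic c P (Eop j M R) := by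
    rw [vard_eq c i (hR.mono hBM), map_sum]
    exact Finset.sum_congr rfl fun j _ => (xic c P).map_smul _ _
  -- Step 3 : transform the remainder term (KB + expansion of vard)
  have hrem : (∑ j : Fin l, c i j • (∑ k : Fin l, ∑ n ∈ range M,
        ((nDop l) ^ n) (pderiv ((j, n) : Fin l × ℕ) (_root_.pa l (vard c k P))
          * Eop k B R)))
      = ∑ j : Fin l, ∑ k : Fin l, ∑ j' : Fin l, (c i j * c k j') • E2 j j' k := by
    refine Finset.sum_congr rfl fun j _ => ?_
    rw [Finset.smul_sum]
    refine Finset.sum_congr rfl fun k _ => ?_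
    have step1 : (∑ n ∈ range M, ((nDop l) ^ n)
          (pderiv ((j, n) : Fin l × ℕ) (_root_.pa l (vard c k P)) * Eop k B R))
        = ∑ n ∈ range M, ((nDop l) ^ n) (pderiv ((j, n) : Fin l × ℕ) (vard c k P)
            * nDop l (Eop k B R)) := by
      calc (∑ n ∈ range M, ((nDop l) ^ n)
            (pderiv ((j, n) : Fin l × ℕ) (_root_.pa l (vard c k P)) * Eop k B R))
          = ∑ n ∈ range M, ((nDop l) ^ n)
              (Top (fun n => pderiv ((j, n) : Fin l × ℕ) (vard c k P)) n * Eop k B R) := by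
            refine Finset.sum_congr rfl fun n _ => ?_
            rw [congrFun (pdseq_pa j (vard c k P)) n]
        _ = _ := KB_top (Eop k B R) (SB.pdseq (hvP k) j) (by omega)
    have hv : ∀ n : ℕ, pderiv ((j, n) : Fin l × ℕ) (vard c k P)
        = ∑ j' : Fin l, c k j' • pderiv ((j, n) : Fin l × ℕ) (Eop j' B P) := by
      intro n
      rw [vard_eq c k hP, map_sum]
      exact Finset.sum_congr rfl fun j' _ => Derivation.map_smul _ _ _
    have step2 : (∑ n ∈ range M, ((nDop l) ^ n)
          (pderiv ((j, n) : Fin l × ℕ) (vard c k P) * nDop l (Eop k B R)))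
        = ∑ j' : Fin l, c k j' • E2 j j' k := by
      simp only [hE2]
      calc (∑ n ∈ range M, ((nDop l) ^ n)
            (pderiv ((j, n) : Fin l × ℕ) (vard c k P) * nDop l (Eop k B R)))
          = ∑ n ∈ range M, ∑ j' : Fin l, c k j' • ((nDop l) ^ n)
              (pderiv ((j, n) : Fin l × ℕ) (Eop j' B P) * nDop l (Eop k B R)) := by
            refine Finset.sum_congr rfl fun n _ => ?_
            rw [hv n, Finset.sum_mul, map_sum]
            refine Finset.sum_congr rfl fun j' _ => ?_
            rw [smul_mul_assoc, map_smul]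
        _ = _ := by
            rw [Finset.sum_comm]
            exact Finset.sum_congr rfl fun j' _ => (Finset.smul_sum).symm
    rw [step1, step2, Finset.smul_sum]
    exact Finset.sum_congr rfl fun j' _ => by rw [smul_smul]
  -- Step 4 : second right-hand term via Helmholtz
  have rhs2 : xic c R (vard c i P)
      = ∑ j : Fin l, ∑ k : Fin l, ∑ j' : Fin l, (c i j * c k j') • Qq j k j' := by
    rw [xic_apply c R ((hvP i).mono hBM)]
    have hterm : ∀ (k : Fin l) (m : ℕ),
        pderiv ((k, m) : Fin l × ℕ) (vard c i P)
            * (Dl l ^ m) (_root_.pa l (vard c k R))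
          = ∑ j : Fin l, ∑ j' : Fin l, (c i j * c k j') •
              (pderiv ((k, m) : Fin l × ℕ) (Eop j B P)
                * (Dl l ^ m) (_root_.pa l (Eop j' B R))) := by
      intro k m
      rw [vard_eq c i hP, vard_eq c k hR, map_sum, map_sum, map_sum, Finset.sum_mul]
      refine Finset.sum_congr rfl fun j _ => ?_
      rw [Finset.mul_sum]
      refine Finset.sum_congr rfl fun j' _ => ?_
      rw [Derivation.map_smul, Derivation.map_smul, map_smul, smul_mul_smul_comm]
    calc ∑ k : Fin l, ∑ m ∈ range M, pderiv ((k, m) : Fin l × ℕ) (vard c i P)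
            * (Dl l ^ m) (_root_.pa l (vard c k R))
        = ∑ k : Fin l, ∑ m ∈ range M, ∑ j : Fin l, ∑ j' : Fin l, (c i j * c k j') •
            (pderiv ((k, m) : Fin l × ℕ) (Eop j B P)
              * (Dl l ^ m) (_root_.pa l (Eop j' B R))) :=
          Finset.sum_congr rfl fun k _ => Finset.sum_congr rfl fun m _ => hterm k m
      _ = ∑ k : Fin l, ∑ j : Fin l, ∑ j' : Fin l, ∑ m ∈ range M, (c i j * c k j') •
            (pderiv ((k, m) : Fin l × ℕ) (Eop j B P)
              * (Dl l ^ m) (_root_.pa l (Eop j' B R))) := by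
          refine Finset.sum_congr rfl fun k _ => ?_
          rw [Finset.sum_comm]
          exact Finset.sum_congr rfl fun j _ => Finset.sum_comm
      _ = ∑ j : Fin l, ∑ k : Fin l, ∑ j' : Fin l, (c i j * c k j') •
            ∑ m ∈ range M, (pderiv ((k, m) : Fin l × ℕ) (Eop j B P)
              * (Dl l ^ m) (_root_.pa l (Eop j' B R))) := by
          rw [Finset.sum_comm]
          exact Finset.sum_congr rfl fun j _ => Finset.sum_congr rfl fun k _ =>
            Finset.sum_congr rfl fun j' _ => (Finset.smul_sum).symm
      _ = ∑ j : Fin l, ∑ k : Fin l, ∑ j' : Fin l, (c i j * c k j') • Qq j k j' := by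
          refine Finset.sum_congr rfl fun j _ => Finset.sum_congr rfl fun k _ =>
            Finset.sum_congr rfl fun j' _ => ?_
          simp only [hQq]
          congr 1
          exact helm P (_root_.pa l (Eop j' B R)) hP j k hM
  -- Step 5 : cancellation
  have cancel : ∀ j k j' : Fin l, E2 j j' k + Qq j j' k = 0 := by
    intro j k j'
    simp only [hE2, hQq]
    rw [← Finset.sum_add_distrib]
    refine Finset.sum_eq_zero fun n _ => ?_
    rw [← map_add, ← mul_add, nDop_apply, neg_add_cancel, mul_zero, map_zero]
  have key : (∑ j : Fin l, ∑ k : Fin l, ∑ j' : Fin l, (c i j * c k j') • E2 j j' k)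
      + (∑ j : Fin l, ∑ k : Fin l, ∑ j' : Fin l, (c i j * c k j') • Qq j k j') = 0 := by
    have swap : (∑ j : Fin l, ∑ k : Fin l, ∑ j' : Fin l, (c i j * c k j') • Qq j k j')
        = ∑ j : Fin l, ∑ k : Fin l, ∑ j' : Fin l, (c i j * c k j') • Qq j j' k := by
      refine Finset.sum_congr rfl fun j _ => ?_
      rw [Finset.sum_comm]
      refine Finset.sum_congr rfl fun k _ => Finset.sum_congr rfl fun j' _ => ?_
      rw [hc.apply k j']
    rw [swap, ← Finset.sum_add_distrib]
    refine Finset.sum_eq_zero fun j _ => ?_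
    rw [← Finset.sum_add_distrib]
    refine Finset.sum_eq_zero fun k _ => ?_
    rw [← Finset.sum_add_distrib]
    refine Finset.sum_eq_zero fun j' _ => ?_
    rw [← smul_add, cancel j k j', smul_zero]
  rw [lhs2, hrem, rhs1, rhs2]
  rw [eq_neg_of_add_eq_zero_left key]
  rw [← sub_eq_add_neg]

/-! ### Antisymmetry -/

lemma antisym (c : Matrix (Fin l) (Fin l) ℂ) (hc : c.IsSymm) (P R : Pi0 l) :
    xic c P R + xic c R P ∈ LinearMap.range (Dl l) := by
  obtain ⟨B, hP, hR, hvP, hvR⟩ : ∃ B, Bnd B P ∧ Bnd B R ∧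
      (∀ k, Bnd B (vard c k P)) ∧ (∀ k, Bnd B (vard c k R)) := by
    obtain ⟨N1, hN1⟩ := bnd_exists P
    obtain ⟨N2, hN2⟩ := bnd_exists R
    exact ⟨(N1 + N2) + (N1 + N2), hN1.mono (by omega), hN2.mono (by omega),
      fun k => (hN1.mono (by omega : N1 ≤ N1 + N2)).vard c k,
      fun k => (hN2.mono (by omega : N2 ≤ N1 + N2)).vard c k⟩
  set S1 : Pi0 l := ∑ k : Fin l, _root_.pa l (vard c k P) * Eop k B R with hS1
  set S2 : Pi0 l := ∑ k : Fin l, _root_.pa l (vard c k R) * Eop k B P with hS2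
  have h1 : xic c P R - S1 ∈ LinearMap.range (Dl l) := by
    rw [xic_apply c P hR, hS1, ← Finset.sum_sub_distrib]
    refine Submodule.sum_mem _ fun k _ => ?_
    have : (∑ m ∈ range B, pderiv ((k, m) : Fin l × ℕ) R
          * (Dl l ^ m) (_root_.pa l (vard c k P)))
        - _root_.pa l (vard c k P) * Eop k B R
        = ∑ m ∈ range B, ((Dl l ^ m) (_root_.pa l (vard c k P))
            * pderiv ((k, m) : Fin l × ℕ) R
          - _root_.pa l (vard c k P) * ((nDop l) ^ m) (pderiv ((k, m) : Fin l × ℕ) R)) := by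
      rw [Finset.sum_sub_distrib]
      congr 1
      · exact Finset.sum_congr rfl fun m _ => mul_comm _ _
      · rw [Eop, Finset.mul_sum]
    rw [this]
    exact Submodule.sum_mem _ fun m _ => ibp m _ _
  have h2 : xic c R P - S2 ∈ LinearMap.range (Dl l) := by
    rw [xic_apply c R hP, hS2, ← Finset.sum_sub_distrib]
    refine Submodule.sum_mem _ fun k _ => ?_
    have : (∑ m ∈ range B, pderiv ((k, m) : Fin l × ℕ) P
          * (Dl l ^ m) (_root_.pa l (vard c k R)))
        - _root_.pa l (vard c k R) * Eop k B P
        = ∑ m ∈ range B, ((Dl l ^ m) (_root_.pa l (vard c k R))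
            * pderiv ((k, m) : Fin l × ℕ) P
          - _root_.pa l (vard c k R) * ((nDop l) ^ m) (pderiv ((k, m) : Fin l × ℕ) P)) := by
      rw [Finset.sum_sub_distrib]
      congr 1
      · exact Finset.sum_congr rfl fun m _ => mul_comm _ _
      · rw [Eop, Finset.mul_sum]
    rw [this]
    exact Submodule.sum_mem _ fun m _ => ibp m _ _
  have hT : S1 + S2 ∈ LinearMap.range (Dl l) := by
    have e1 : S1 = ∑ k : Fin l, ∑ j : Fin l, c k j
        • (_root_.pa l (Eop j B P) * Eop k B R) := by
      rw [hS1]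
      refine Finset.sum_congr rfl fun k _ => ?_
      rw [vard_eq c k hP, map_sum, Finset.sum_mul]
      refine Finset.sum_congr rfl fun j _ => ?_
      rw [Derivation.map_smul, smul_mul_assoc]
    have e2 : S2 = ∑ k : Fin l, ∑ j : Fin l, c k j
        • (Eop j B P * _root_.pa l (Eop k B R)) := by
      rw [hS2]
      calc S2 = ∑ k : Fin l, ∑ j : Fin l, c k j
            • (_root_.pa l (Eop j B R) * Eop k B P) := by
            refine Finset.sum_congr rfl fun k _ => ?_
            rw [vard_eq c k hR, map_sum, Finset.sum_mul]
            refine Finset.sum_congr rfl fun j _ => ?_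
            rw [Derivation.map_smul, smul_mul_assoc]
        _ = ∑ k : Fin l, ∑ j : Fin l, c k j • (Eop j B P * _root_.pa l (Eop k B R)) := by
            rw [Finset.sum_comm]
            refine Finset.sum_congr rfl fun k _ => Finset.sum_congr rfl fun j _ => ?_
            rw [hc.apply k j, mul_comm]
    rw [e1, e2, ← Finset.sum_add_distrib]
    refine Submodule.sum_mem _ fun k _ => ?_
    rw [← Finset.sum_add_distrib]
    refine Submodule.sum_mem _ fun j _ => ?_
    rw [← smul_add, ← pa_mul]
    exact Submodule.smul_mem _ _ (pa_mem_range _)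
  have : xic c P R + xic c R P = (xic c P R - S1) + (xic c R P - S2) + (S1 + S2) := by
    ring
  rw [this]
  exact Submodule.add_mem _ (Submodule.add_mem _ h1 h2) hT

/-! ### Commutator identity -/

lemma xic_dpow (c : Matrix (Fin l) (Fin l) ℂ) (P : Pi0 l) (m : ℕ) (F : Pi0 l) :
    xic c P ((Dl l ^ m) F) = (Dl l ^ m) (xic c P F) := by
  induction m generalizing F with
  | zero => simp
  | succ m ih =>
    have h1 : ∀ G : Pi0 l, (Dl l ^ (m + 1)) G = (Dl l ^ m) (_root_.pa l G) := by
      intro G; rw [pow_succ]; rfl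
    rw [h1, ih, h1]
    refine congrArg _ ?_
    exact xic_pa c P F

lemma commut (c : Matrix (Fin l) (Fin l) ℂ) (hc : c.IsSymm) (P R S : Pi0 l) :
    xic c P (xic c R S) - xic c R (xic c P S) = xic c (xic c P R) S := by
  have h : ⁅(xic c P : Derivation ℂ (Pi0 l) (Pi0 l)), xic c R⁆ = xic c (xic c P R) := by
    apply derivation_ext
    intro p
    rw [Derivation.commutator_apply, xic_X, xic_X, xic_X, xic_dpow, xic_dpow,
      ← map_sub]
    congr 1
    rw [master c hc P R p.1]
  have := congrArg (fun d : Derivation ℂ (Pi0 l) (Pi0 l) => d S) h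
  simpa [Derivation.commutator_apply] using this

/-! ### Fzsub lemmas -/

lemma range_le_Fzsub : LinearMap.range (Dl l) ≤ Fzsub l := le_sup_left

lemma Fzsub_decomp {x : Pi0 l} (hx : x ∈ Fzsub l) :
    ∃ (q : Pi0 l) (t : ℂ), x = _root_.pa l q + t • (1 : Pi0 l) := by
  rw [Fzsub, Submodule.mem_sup] at hx
  obtain ⟨y, hy, z, hz, rfl⟩ := hx
  obtain ⟨q, rfl⟩ := hy
  obtain ⟨t, rfl⟩ := Submodule.mem_span_singleton.mp hz
  exact ⟨q, t, rfl⟩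

lemma vard_zero_of_mem (c : Matrix (Fin l) (Fin l) ℂ) (k : Fin l) {x : Pi0 l}
    (hx : x ∈ Fzsub l) : vard c k x = 0 := by
  obtain ⟨q, t, rfl⟩ := Fzsub_decomp hx
  rw [vard_add, vard_smul, vard_pa, vard_one, smul_zero, add_zero]

lemma xic_mem_Fzsub (c : Matrix (Fin l) (Fin l) ℂ) (P : Pi0 l) {x : Pi0 l}
    (hx : x ∈ Fzsub l) : xic c P x ∈ Fzsub l := by
  obtain ⟨q, t, rfl⟩ := Fzsub_decomp hx
  rw [map_add, Derivation.map_smul, Derivation.map_one_eq_zero, smul_zero, add_zero,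
    xic_pa]
  exact range_le_Fzsub (pa_mem_range _)

end LocFun

open LocFun

/-- there is a unique Lie algebra structure on `F₀ = π₀/(∂π₀ + ℂ·1)` whose
bracket satisfies `{[P],[R]} = [ξ_P(R)]`; in particular the bracket is well defined,
antisymmetric and satisfies the Jacobi identity. -/
theorem unique_lie_structure_on_local_functionals (l : ℕ) (hl : 1 ≤ l)
    (c : Matrix (Fin l) (Fin l) ℂ) (hc : c.IsSymm) :
    ∃! br : Fz l →ₗ[ℂ] Fz l →ₗ[ℂ] Fz l,
      (∀ P R : Pi0 l,
        br (Submodule.mkQ (Fzsub l) P) (Submodule.mkQ (Fzsub l) R)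
          = Submodule.mkQ (Fzsub l) (xic c P R)) ∧
      (∀ x y : Fz l, br x y = - br y x) ∧
      (∀ x y z : Fz l, br x (br y z) = br (br x y) z + br y (br x z)) := by
  classical
  have hsurj : Function.Surjective ((Fzsub l).mkQ) := Submodule.mkQ_surjective _
  have ext_q : ∀ (f g : Fz l →ₗ[ℂ] Fz l),
      (∀ x : Pi0 l, f ((Fzsub l).mkQ x) = g ((Fzsub l).mkQ x)) → f = g := by
    intro f g h
    apply LinearMap.ext
    intro y
    obtain ⟨x, rfl⟩ := hsurj y
    exact h x
  have hker : ∀ P : Pi0 l,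
      Fzsub l ≤ LinearMap.ker ((Fzsub l).mkQ ∘ₗ (xic c P).toLinearMap) := by
    intro P x hx
    simp only [LinearMap.mem_ker, LinearMap.comp_apply]
    rw [show ((xic c P).toLinearMap) x = xic c P x from rfl,
      Submodule.mkQ_apply, Submodule.Quotient.mk_eq_zero]
    exact xic_mem_Fzsub c P hx
  set brP : Pi0 l → (Fz l →ₗ[ℂ] Fz l) := fun P =>
    (Fzsub l).liftQ ((Fzsub l).mkQ ∘ₗ (xic c P).toLinearMap) (hker P) with hbrPdef
  have hbrP : ∀ P R : Pi0 l, brP P ((Fzsub l).mkQ R) = (Fzsub l).mkQ (xic c P R) := by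
    intro P R
    rfl
  set br2 : Pi0 l →ₗ[ℂ] (Fz l →ₗ[ℂ] Fz l) :=
    { toFun := brP
      map_add' := by
        intro P P'
        refine ext_q _ _ fun R => ?_
        rw [LinearMap.add_apply, hbrP, hbrP, hbrP, ← map_add]
        congr 1
        rw [xic_add]
        rfl
      map_smul' := by
        intro t P
        refine ext_q _ _ fun R => ?_
        rw [RingHom.id_apply, LinearMap.smul_apply, hbrP, hbrP, ← map_smul]
        congr 1
        rw [xic_smul]
        rfl } with hbr2def
  have hker2 : Fzsub l ≤ LinearMap.ker br2 := by
    intro P hP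
    rw [LinearMap.mem_ker]
    refine ext_q _ _ fun R => ?_
    rw [show br2 P = brP P from rfl, hbrP]
    rw [xic_of_vard_zero c P (fun k => vard_zero_of_mem c k hP)]
    simp
  set br : Fz l →ₗ[ℂ] Fz l →ₗ[ℂ] Fz l := (Fzsub l).liftQ br2 hker2 with hbrdef
  have hbr : ∀ P R : Pi0 l,
      br ((Fzsub l).mkQ P) ((Fzsub l).mkQ R) = (Fzsub l).mkQ (xic c P R) := by
    intro P R
    rfl
  refine ⟨br, ⟨hbr, ?_, ?_⟩, ?_⟩
  · -- antisymmetry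
    intro x y
    obtain ⟨P, rfl⟩ := hsurj x
    obtain ⟨R, rfl⟩ := hsurj y
    rw [hbr, hbr, eq_neg_iff_add_eq_zero, ← map_add, Submodule.mkQ_apply,
      Submodule.Quotient.mk_eq_zero]
    exact range_le_Fzsub (antisym c hc P R)
  · -- Jacobi
    intro x y z
    obtain ⟨P, rfl⟩ := hsurj x
    obtain ⟨R, rfl⟩ := hsurj y
    obtain ⟨S, rfl⟩ := hsurj z
    rw [hbr R S, hbr P (xic c R S), hbr P R, hbr (xic c P R) S, hbr P S,
      hbr R (xic c P S), ← map_add]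
    congr 1
    exact eq_add_of_sub_eq (commut c hc P R S)
  · -- uniqueness
    intro br' h'
    obtain ⟨h'1, -, -⟩ := h'
    apply LinearMap.ext
    intro x
    obtain ⟨P, rfl⟩ := hsurj x
    refine ext_q _ _ fun R => ?_
    rw [h'1, hbr]
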